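/- Let A and B be unital C*-algebras and π : A → B a surjective unital *-homomorphism. If u ∈ B is a unitary lying in the path component of the identity of the unitary group of B, then there exists a unitary ũ ∈ A with π(ũ) = u. -/

import Mathlib

open NormedSpace Complex
open scoped Pointwise

lemma my_exp_of_near_one {B : Type*} [CStarAlgebra B] (w : B)
    (h1 : star w * w = 1) (h2 : w * star w = 1) (hnorm : ‖w - 1‖ < 2) :
    ∃ a : B, IsSelfAdjoint a ∧ NormedSpace.exp (I • a) = w := by
  have hnormal : IsStarNormal w := ⟨by rw [Commute, SemiconjBy, h1, h2]⟩
  have hmemu : w ∈ unitary B := ⟨h1, h2⟩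
  have hspec : spectrum ℂ w ⊆ Metric.sphere 0 1 := spectrum.subset_circle_of_unitary hmemu
  have hne : (-1 : ℂ) ∉ spectrum ℂ w := by
    intro hmem'
    have h2' : (-2 : ℂ) ∈ spectrum ℂ (w - algebraMap ℂ B 1) := by
      have hsub : (-1 : ℂ) - 1 ∈ spectrum ℂ w - ({1} : Set ℂ) :=
        Set.sub_mem_sub hmem' (Set.mem_singleton (1:ℂ))
      rw [spectrum.sub_singleton_eq] at hsub
      norm_num at hsub ⊢
      convert hsub using 2
    have hone : ‖(1:B)‖ ≤ 1 := by
      have h := CStarRing.norm_star_mul_self (x := (1:B))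
      rw [star_one, one_mul] at h
      nlinarith [norm_nonneg (1:B)]
    have hle := spectrum.norm_le_norm_mul_of_mem h2'
    rw [map_one] at hle
    have h2norm : ‖(-2 : ℂ)‖ = 2 := by norm_num
    rw [h2norm] at hle
    have hw1 : ‖w - 1‖ * ‖(1:B)‖ ≤ ‖w - 1‖ * 1 := by
      apply mul_le_mul_of_nonneg_left hone (norm_nonneg _)
    rw [mul_one] at hw1
    linarith
  have hslit : ∀ z ∈ spectrum ℂ w, z ∈ slitPlane := by
    intro z hz
    by_contra hcon
    rw [mem_slitPlane_iff, not_or, not_lt, not_ne_iff] at hcon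
    obtain ⟨hre, him⟩ := hcon
    have hzre : z = (z.re : ℂ) := Complex.ext rfl (by simpa using him)
    have habs : ‖z‖ = 1 := by
      simpa using Metric.mem_sphere.mp (hspec hz)
    rw [hzre, Complex.norm_real, Real.norm_eq_abs] at habs
    have : z.re = -1 := by
      rcases abs_eq (by norm_num : (0:ℝ) ≤ 1) |>.mp habs with h | h
      · linarith
      · exact h
    apply hne
    rw [hzre, this] at hz
    exact_mod_cast hz
  have hcontArg : ContinuousOn (fun z : ℂ => (arg z : ℂ)) (spectrum ℂ w) := by
    intro z hz
    exact (Complex.continuous_ofReal.continuousAt.comp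
      (Complex.continuousAt_arg (hslit z hz))).continuousWithinAt
  set a := cfc (fun z : ℂ => (arg z : ℂ)) w with ha
  have hsa : IsSelfAdjoint a := by
    rw [IsSelfAdjoint, ha, ← cfc_star]
    exact cfc_congr fun z hz => by simp [Complex.conj_ofReal]
  refine ⟨a, hsa, ?_⟩
  have hIa : I • a = cfc (fun z : ℂ => I * (arg z : ℂ)) w := by
    rw [ha, ← cfc_const_mul I (fun z : ℂ => (arg z : ℂ)) w hcontArg]
  have hcont2 : ContinuousOn (fun z : ℂ => I * (arg z : ℂ)) (spectrum ℂ w) :=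
    hcontArg.const_smul I
  rw [hIa, ← CFC.complex_exp_eq_normedSpace_exp,
    ← cfc_comp Complex.exp (fun z : ℂ => I * (arg z : ℂ)) w hnormal
      Complex.continuous_exp.continuousOn hcont2]
  calc cfc (Complex.exp ∘ fun z : ℂ => I * (arg z : ℂ)) w
      = cfc (id : ℂ → ℂ) w := by
        apply cfc_congr
        intro z hz
        have habs : ‖z‖ = 1 := by
          simpa using Metric.mem_sphere.mp (hspec hz)
        have := Complex.norm_mul_exp_arg_mul_I z
        rw [habs] at this
        simpa [Function.comp, mul_comm] using this
    _ = w := cfc_id ℂ w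

open scoped CStarAlgebra in
lemma my_lift_near {A B : Type*} [CStarAlgebra A] [CStarAlgebra B]
    (π : A →⋆ₐ[ℂ] B) (hπ : Function.Surjective π)
    (w : B) (h1 : star w * w = 1) (h2 : w * star w = 1) (hnorm : ‖w - 1‖ < 2) :
    ∃ v : A, star v * v = 1 ∧ v * star v = 1 ∧ π v = w := by
  obtain ⟨a, hsa, hexp⟩ := my_exp_of_near_one w h1 h2 hnorm
  obtain ⟨c, hc⟩ := hπ a
  set b := (2⁻¹ : ℂ) • (c + star c) with hbdef
  have hb : IsSelfAdjoint b := by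
    rw [IsSelfAdjoint, hbdef, star_smul, star_add, star_star, add_comm]
    congr 1
    simp [RCLike.star_def, Complex.conj_ofReal]
  have hπb : π b = a := by
    rw [hbdef, map_smul, map_add, map_star, hc, hsa.star_eq]
    rw [smul_add, ← add_smul]
    norm_num
  letI : NormedAlgebra ℚ A := .restrictScalars ℚ ℂ A
  letI : NormedAlgebra ℚ B := .restrictScalars ℚ ℂ B
  have hmem : NormedSpace.exp (I • b) ∈ unitary A :=
    exp_mem_unitary_of_mem_skewAdjoint (hb.smul_mem_skewAdjoint conj_I)
  refine ⟨NormedSpace.exp (I • b), hmem.1, hmem.2, ?_⟩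
  rw [map_exp π (map_continuous π), map_smul, hπb, hexp]


/-- Let `π : A → B` be a surjective unital `*`-homomorphism of unital C*-algebras.
Every unitary `u ∈ B` in the path component of `1` in the unitary group of `B`
(i.e. joined to `1` by a continuous path of unitaries) lifts to a unitary of `A`. -/
theorem stmt6 {A B : Type*} [CStarAlgebra A] [CStarAlgebra B]
    (π : A →⋆ₐ[ℂ] B) (hπ : Function.Surjective π)
    (u : B) (hu : star u * u = 1) (hu' : u * star u = 1)
    (hpath : ∃ γ : Path (1 : B) u, ∀ t, star (γ t) * γ t = 1 ∧ γ t * star (γ t) = 1) :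
    ∃ v : A, star v * v = 1 ∧ v * star v = 1 ∧ π v = u := by
  obtain ⟨γ, hγ⟩ := hpath
  have hUC : UniformContinuous γ :=
    CompactSpace.uniformContinuous_of_continuous γ.continuous
  obtain ⟨δ, hδpos, hδ⟩ := Metric.uniformContinuous_iff.mp hUC 2 (by norm_num)
  obtain ⟨n, hn⟩ := exists_nat_one_div_lt hδpos
  set m : ℕ := n + 1 with hm
  have hmpos : (0:ℝ) < m := by positivity
  set t : ℕ → unitInterval := fun k =>
    ⟨min ((k : ℝ) / m) 1, le_min (by positivity) zero_le_one, min_le_right _ _⟩ with ht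
  have htval : ∀ k : ℕ, k ≤ m → ((t k : ℝ)) = (k : ℝ) / m := by
    intro k hk
    simp only [ht]
    exact min_eq_left (by
      rw [div_le_one hmpos]
      exact_mod_cast hk)
  have key : ∀ k : ℕ, k ≤ m → ∃ v : A, star v * v = 1 ∧ v * star v = 1 ∧ π v = γ (t k) := by
    intro k
    induction k with
    | zero =>
      intro _
      refine ⟨1, by simp, by simp, ?_⟩
      have h0 : t 0 = 0 := by
        ext
        simp [ht]
      rw [map_one, h0, γ.source]
    | succ k ih =>
      intro hk
      obtain ⟨v, hv1, hv2, hv3⟩ := ih (Nat.le_of_succ_le hk)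
      set s := γ (t k) with hs
      set s' := γ (t (k + 1)) with hs'
      obtain ⟨hsl, hsr⟩ := hγ (t k)
      obtain ⟨hsl', hsr'⟩ := hγ (t (k + 1))
      have hone : ‖(1:B)‖ ≤ 1 := by
        have h := CStarRing.norm_star_mul_self (x := (1:B))
        rw [star_one, one_mul] at h
        nlinarith [norm_nonneg (1:B)]
      have hnorms : ‖star s‖ ≤ 1 := by
        have h := CStarRing.norm_star_mul_self (x := s)
        rw [hsl] at h
        rw [norm_star]
        nlinarith [norm_nonneg s]
      have hdist : dist (t k) (t (k + 1)) < δ := by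
        have hdiff : ((t k : ℝ)) - ((t (k+1) : ℝ)) = -(1 / m) := by
          rw [htval k (Nat.le_of_succ_le hk), htval (k+1) hk]
          push_cast
          field_simp
          ring
        rw [Subtype.dist_eq, Real.dist_eq, hdiff, abs_neg,
          abs_of_pos (by positivity : (0:ℝ) < 1 / m)]
        rw [hm]
        push_cast
        exact hn
      have hclose : dist s' s < 2 := hδ (by rw [dist_comm]; exact hdist)
      set w := star s * s' with hw
      have hw1 : star w * w = 1 := by
        rw [hw, star_mul, star_star, mul_assoc, ← mul_assoc s, hsr, one_mul, hsl']
      have hw2 : w * star w = 1 := by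
        rw [hw, star_mul, star_star, mul_assoc, ← mul_assoc s', hsr', one_mul, hsl]
      have hwnorm : ‖w - 1‖ < 2 := by
        have hrw : w - 1 = star s * (s' - s) := by
          rw [hw, mul_sub, hsl]
        rw [hrw]
        calc ‖star s * (s' - s)‖ ≤ ‖star s‖ * ‖s' - s‖ := norm_mul_le _ _
          _ ≤ 1 * ‖s' - s‖ := by
            apply mul_le_mul_of_nonneg_right hnorms (norm_nonneg _)
          _ = ‖s' - s‖ := one_mul _
          _ < 2 := by rwa [← dist_eq_norm]
      obtain ⟨vw, hvw1, hvw2, hvw3⟩ := my_lift_near π hπ w hw1 hw2 hwnorm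
      refine ⟨v * vw, ?_, ?_, ?_⟩
      · rw [star_mul, mul_assoc, ← mul_assoc (star v), hv1, one_mul, hvw1]
      · rw [star_mul, mul_assoc, ← mul_assoc vw, hvw2, one_mul, hv2]
      · rw [map_mul, hv3, hvw3, hw, ← mul_assoc, hsr, one_mul]
  obtain ⟨v, h1, h2, h3⟩ := key m le_rfl
  have hend : t m = 1 := by
    ext
    rw [htval m le_rfl, div_self (ne_of_gt hmpos)]
    rfl
  exact ⟨v, h1, h2, by rw [h3, hend, γ.target]⟩
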